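/- Let λ, μ be real numbers and h > 0. If −1 < λh < 0 and μ² < 2λ(λh − 2)(λh + 1)/(λh + 2), then λ + μ²/2 < 0. In other words, the mean-square stability region R_AB2(h) of the two-step Adams–Bashforth Maruyama scheme is contained in the mean-square stability region R_SDE = {(λ, μ) ∈ ℝ² : λ + μ²/2 < 0} of the test equation, for every step size h > 0. -/

import Mathlib

/-- The mean-square stability region of AB2 is contained in that of the test equation:
`R_AB2(h) ⊆ R_SDE` for every `h > 0`. -/
theorem stmt_14 (lam mu h : ℝ) (hh : 0 < h)
    (h₁ : -1 < lam * h) (h₂ : lam * h < 0)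
    (h₃ : mu ^ 2 < 2 * lam * (lam * h - 2) * (lam * h + 1) / (lam * h + 2)) :
    lam + mu ^ 2 / 2 < 0 := by
  have hx2 : 0 < lam * h + 2 := by linarith
  rw [lt_div_iff₀ hx2] at h₃
  have hlam : lam < 0 := by
    rcases lt_trichotomy lam 0 with h | h | h
    · exact h
    · simp [h] at h₂
    · nlinarith
  have key : mu ^ 2 * (lam * h + 2) < -2 * lam * (lam * h + 2) := by
    nlinarith [mul_nonneg (neg_nonneg.2 hlam.le) (sq_nonneg (lam * h))]
  have := (mul_lt_mul_iff_of_pos_right hx2).mp key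
  linarith
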